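/- Let Ω ⊂ H^n be open convex with B_H(0,cR) ⊂ Ω for constants c, R > 0, and u: closure(Ω) → R an H-convex function with u ≤ 0 on Ω. Let ξ₁, ξ₂ ∈ B_H(0,cR) with ξ₂ ∈ H_{ξ₁}, N(ξ₁) ≤ c₁R, N(ξ₂) ≤ c₂R, d_H(ξ₁,ξ₂) ≤ c₃R, where c₁,c₂ ≥ 0, c₃ > 0, c₁+c₃ < c, c₂+c₃ < c. Then ((c−c₁−c₃)/(c−c₁))·u(ξ₁) ≥ u(ξ₂) ≥ ((c−c₂)/(c−c₂−c₃))·u(ξ₁). -/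

import Mathlib

open scoped BigOperators

/-- A point of the Heisenberg group `ℍⁿ` in real coordinates `(x, y, t)`. -/
abbrev Hpt (n : ℕ) := (Fin n → ℝ) × (Fin n → ℝ) × ℝ

/-- Euclidean dot product on `ℝⁿ`. -/
def dotR {n : ℕ} (a b : Fin n → ℝ) : ℝ := ∑ i, a i * b i

/-- Heisenberg group law. -/
def hmul {n : ℕ} (ξ η : Hpt n) : Hpt n :=
  (ξ.1 + η.1, ξ.2.1 + η.2.1,
    ξ.2.2 + η.2.2 + 2 * (dotR ξ.2.1 η.1 - dotR ξ.1 η.2.1))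

/-- Heisenberg group inverse. -/
def hinv {n : ℕ} (ξ : Hpt n) : Hpt n := (-ξ.1, -ξ.2.1, -ξ.2.2)

/-- Heisenberg dilation `δ_l`. -/
def hdil {n : ℕ} (l : ℝ) (ξ : Hpt n) : Hpt n := (l • ξ.1, l • ξ.2.1, l ^ 2 * ξ.2.2)

/-- The Korányi gauge `N(x,y,t) = ((|x|²+|y|²)² + t²)^(1/4)`. -/
noncomputable def KN {n : ℕ} (ξ : Hpt n) : ℝ :=
  ((dotR ξ.1 ξ.1 + dotR ξ.2.1 ξ.2.1) ^ 2 + ξ.2.2 ^ 2) ^ ((1 : ℝ) / 4)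

/-- The Korányi–Cygan metric. -/
noncomputable def dH {n : ℕ} (ξ η : Hpt n) : ℝ := KN (hmul (hinv η) ξ)

/-- The horizontal plane at `ξ₀`. -/
def Hplane {n : ℕ} (ξ₀ : Hpt n) : Set (Hpt n) :=
  {ξ | ξ.2.2 = ξ₀.2.2 + 2 * (dotR ξ.1 ξ₀.2.1 - dotR ξ₀.1 ξ.2.1)}

/-- Projection onto the first `2n` coordinates. -/
def Pr1 {n : ℕ} (ξ : Hpt n) : (Fin n → ℝ) × (Fin n → ℝ) := (ξ.1, ξ.2.1)

/-- Dot product on `ℝ^{2n}`. -/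
def dot2n {n : ℕ} (p q : (Fin n → ℝ) × (Fin n → ℝ)) : ℝ := dotR p.1 q.1 + dotR p.2 q.2

/-- The horizontal subdifferential of `u` (with domain `Ω`) at `ξ₀`. -/
def subdiffH {n : ℕ} (Ω : Set (Hpt n)) (u : Hpt n → ℝ) (ξ₀ : Hpt n) :
    Set ((Fin n → ℝ) × (Fin n → ℝ)) :=
  {p | ∀ ξ ∈ Ω ∩ Hplane ξ₀, u ξ ≥ u ξ₀ + dot2n p (Pr1 ξ - Pr1 ξ₀)}

/-- `H`-convexity of a set. -/
def HConvexSet {n : ℕ} (S : Set (Hpt n)) : Prop :=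
  ∀ ξ₁ ∈ S, ∀ ξ₂ ∈ S, ξ₁ ∈ Hplane ξ₂ → ∀ l ∈ Set.Icc (0 : ℝ) 1,
    hmul ξ₁ (hdil l (hmul (hinv ξ₁) ξ₂)) ∈ S

/-- `H`-convexity of a function on a set. -/
def HConvexOn {n : ℕ} (S : Set (Hpt n)) (u : Hpt n → ℝ) : Prop :=
  ∀ ξ₁ ∈ S, ∀ ξ₂ ∈ S, ξ₁ ∈ Hplane ξ₂ → ∀ l ∈ Set.Icc (0 : ℝ) 1,
    u (hmul ξ₁ (hdil l (hmul (hinv ξ₁) ξ₂))) ≤ (1 - l) * u ξ₁ + l * u ξ₂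

/-- Horizontal boundedness: the horizontal slices have uniformly bounded diameter. -/
def horizBounded {n : ℕ} (Ω : Set (Hpt n)) : Prop :=
  ∃ M : ℝ, ∀ ξ ∈ Ω, ∀ ζ ∈ Ω ∩ Hplane ξ, ∀ η ∈ Ω ∩ Hplane ξ, dH ζ η ≤ M

section HarnackAux
-- dotR lemmas
lemma dotR_comm {n : ℕ} (a b : Fin n → ℝ) : dotR a b = dotR b a := by
  unfold dotR; exact Finset.sum_congr rfl fun i _ => mul_comm _ _
lemma dotR_add_left {n : ℕ} (a b c : Fin n → ℝ) : dotR (a + b) c = dotR a c + dotR b c := by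
  unfold dotR; rw [← Finset.sum_add_distrib]; exact Finset.sum_congr rfl fun i _ => by
    simp [add_mul]
lemma dotR_add_right {n : ℕ} (a b c : Fin n → ℝ) : dotR a (b + c) = dotR a b + dotR a c := by
  rw [dotR_comm, dotR_add_left, dotR_comm b a, dotR_comm c a]
lemma dotR_neg_left {n : ℕ} (a b : Fin n → ℝ) : dotR (-a) b = -dotR a b := by
  unfold dotR; rw [← Finset.sum_neg_distrib]; exact Finset.sum_congr rfl fun i _ => by simp
lemma dotR_neg_right {n : ℕ} (a b : Fin n → ℝ) : dotR a (-b) = -dotR a b := by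
  rw [dotR_comm, dotR_neg_left, dotR_comm b a]
lemma dotR_smul_left {n : ℕ} (s : ℝ) (a b : Fin n → ℝ) : dotR (s • a) b = s * dotR a b := by
  unfold dotR; rw [Finset.mul_sum]; exact Finset.sum_congr rfl fun i _ => by
    simp [mul_assoc]
lemma dotR_smul_right {n : ℕ} (s : ℝ) (a b : Fin n → ℝ) : dotR a (s • b) = s * dotR a b := by
  rw [dotR_comm, dotR_smul_left, dotR_comm b a]
lemma dotR_self_nonneg {n : ℕ} (a : Fin n → ℝ) : 0 ≤ dotR a a :=
  Finset.sum_nonneg fun i _ => mul_self_nonneg _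

-- group lemmas
lemma hmul_inv_cancel_left {n : ℕ} (a b : Hpt n) : hmul (hinv a) (hmul a b) = b := by
  unfold hmul hinv
  refine Prod.ext (by simp) (Prod.ext (by simp) ?_)
  simp only [dotR_neg_left, dotR_add_right, dotR_add_left, dotR_comm a.2.1 a.1]
  ring
lemma hmul_cancel_left {n : ℕ} (a b : Hpt n) : hmul a (hmul (hinv a) b) = b := by
  unfold hmul hinv
  refine Prod.ext (by simp) (Prod.ext (by simp) ?_)
  simp only [dotR_neg_left, dotR_neg_right, dotR_add_right, dotR_add_left, dotR_comm a.2.1 a.1]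
  ring
lemma hdil_hdil {n : ℕ} (s t : ℝ) (ξ : Hpt n) : hdil s (hdil t ξ) = hdil (s * t) ξ := by
  unfold hdil
  refine Prod.ext ?_ (Prod.ext ?_ ?_) <;> simp [smul_smul, mul_pow] <;> ring
lemma hdil_one {n : ℕ} (ξ : Hpt n) : hdil 1 ξ = ξ := by
  unfold hdil; simp

-- complex gauge
noncomputable def gC {n : ℕ} (ξ : Hpt n) : ℂ :=
  ⟨dotR ξ.1 ξ.1 + dotR ξ.2.1 ξ.2.1, ξ.2.2⟩

lemma KN_eq_sqrt {n : ℕ} (ξ : Hpt n) : KN ξ = Real.sqrt ‖gC ξ‖ := by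
  unfold KN gC
  rw [Complex.norm_def, Complex.normSq_mk,
    show (dotR ξ.1 ξ.1 + dotR ξ.2.1 ξ.2.1) * (dotR ξ.1 ξ.1 + dotR ξ.2.1 ξ.2.1)
      + ξ.2.2 * ξ.2.2 = (dotR ξ.1 ξ.1 + dotR ξ.2.1 ξ.2.1) ^ 2 + ξ.2.2 ^ 2 by ring,
    Real.sqrt_eq_rpow, Real.sqrt_eq_rpow, ← Real.rpow_mul (by positivity)]
  norm_num

lemma KN_nonneg {n : ℕ} (ξ : Hpt n) : 0 ≤ KN ξ := by
  rw [KN_eq_sqrt]; exact Real.sqrt_nonneg _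

lemma abs_gC_eq {n : ℕ} (ξ : Hpt n) : ‖gC ξ‖ = KN ξ ^ 2 := by
  rw [KN_eq_sqrt, Real.sq_sqrt (norm_nonneg _)]

lemma KN_hdil {n : ℕ} {l : ℝ} (hl : 0 ≤ l) (ξ : Hpt n) : KN (hdil l ξ) = l * KN ξ := by
  unfold KN hdil
  simp only [dotR_smul_left, dotR_smul_right]
  rw [show (l * (l * dotR ξ.1 ξ.1) + l * (l * dotR ξ.2.1 ξ.2.1)) ^ 2 + (l ^ 2 * ξ.2.2) ^ 2
      = (l ^ 4) * ((dotR ξ.1 ξ.1 + dotR ξ.2.1 ξ.2.1) ^ 2 + ξ.2.2 ^ 2) by ring]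
  rw [Real.mul_rpow (by positivity) (by positivity), ← Real.rpow_natCast l 4,
    ← Real.rpow_mul hl]
  norm_num

noncomputable def SC {n : ℕ} (ξ η : Hpt n) : ℂ := ∑ i, (⟨ξ.1 i, ξ.2.1 i⟩ * ⟨η.1 i, -η.2.1 i⟩ : ℂ)

lemma SC_re {n : ℕ} (ξ η : Hpt n) : (SC ξ η).re = dotR ξ.1 η.1 + dotR ξ.2.1 η.2.1 := by
  unfold SC dotR
  rw [Complex.re_sum, ← Finset.sum_add_distrib]
  exact Finset.sum_congr rfl fun i _ => by simp [Complex.mul_re]; try ring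

lemma SC_im {n : ℕ} (ξ η : Hpt n) : (SC ξ η).im = dotR ξ.2.1 η.1 - dotR ξ.1 η.2.1 := by
  unfold SC dotR
  rw [Complex.im_sum, ← Finset.sum_sub_distrib]
  exact Finset.sum_congr rfl fun i _ => by simp [Complex.mul_im]; try ring

lemma gC_hmul {n : ℕ} (ξ η : Hpt n) : gC (hmul ξ η) = gC ξ + gC η + 2 * SC ξ η := by
  unfold gC hmul
  apply Complex.ext <;>
    simp [Complex.mul_re, Complex.mul_im, SC_re, SC_im, dotR_add_left, dotR_add_right,
      dotR_comm η.1 ξ.1, dotR_comm η.2.1 ξ.2.1] <;> ring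

lemma abs_SC_le {n : ℕ} (ξ η : Hpt n) : ‖SC ξ η‖ ≤ KN ξ * KN η := by
  have h1 : ‖SC ξ η‖ ≤
      ∑ i, ‖(⟨ξ.1 i, ξ.2.1 i⟩ : ℂ)‖ * ‖(⟨η.1 i, -η.2.1 i⟩ : ℂ)‖ := by
    refine le_trans (norm_sum_le _ _) ?_
    exact le_of_eq (Finset.sum_congr rfl fun i _ => norm_mul _ _)
  have h2 : ∑ i, ‖(⟨ξ.1 i, ξ.2.1 i⟩ : ℂ)‖ * ‖(⟨η.1 i, -η.2.1 i⟩ : ℂ)‖ ≤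
      Real.sqrt (∑ i, ‖(⟨ξ.1 i, ξ.2.1 i⟩ : ℂ)‖ ^ 2) *
      Real.sqrt (∑ i, ‖(⟨η.1 i, -η.2.1 i⟩ : ℂ)‖ ^ 2) :=
    Real.sum_mul_le_sqrt_mul_sqrt _ _ _
  have e1 : ∑ i, ‖(⟨ξ.1 i, ξ.2.1 i⟩ : ℂ)‖ ^ 2 = dotR ξ.1 ξ.1 + dotR ξ.2.1 ξ.2.1 := by
    unfold dotR
    rw [← Finset.sum_add_distrib]
    refine Finset.sum_congr rfl fun i _ => ?_
    rw [Complex.sq_norm, Complex.normSq_mk]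
  have e2 : ∑ i, ‖(⟨η.1 i, -η.2.1 i⟩ : ℂ)‖ ^ 2 = dotR η.1 η.1 + dotR η.2.1 η.2.1 := by
    unfold dotR
    rw [← Finset.sum_add_distrib]
    refine Finset.sum_congr rfl fun i _ => ?_
    rw [Complex.sq_norm, Complex.normSq_mk]; ring
  have r1 : dotR ξ.1 ξ.1 + dotR ξ.2.1 ξ.2.1 ≤ KN ξ ^ 2 := by
    rw [← abs_gC_eq]; exact le_trans (Complex.re_le_norm (gC ξ)) (le_refl _)
  have r2 : dotR η.1 η.1 + dotR η.2.1 η.2.1 ≤ KN η ^ 2 := by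
    rw [← abs_gC_eq]; exact le_trans (Complex.re_le_norm (gC η)) (le_refl _)
  calc ‖SC ξ η‖ ≤ _ := h1
    _ ≤ _ := h2
    _ ≤ Real.sqrt (KN ξ ^ 2) * Real.sqrt (KN η ^ 2) := by
        rw [e1, e2]
        exact mul_le_mul (Real.sqrt_le_sqrt r1) (Real.sqrt_le_sqrt r2)
          (Real.sqrt_nonneg _) (Real.sqrt_nonneg _)
    _ = KN ξ * KN η := by
        rw [Real.sqrt_sq (KN_nonneg ξ), Real.sqrt_sq (KN_nonneg η)]

lemma KN_triangle {n : ℕ} (ξ η : Hpt n) : KN (hmul ξ η) ≤ KN ξ + KN η := by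
  rw [KN_eq_sqrt]
  have h : ‖gC (hmul ξ η)‖ ≤ (KN ξ + KN η) ^ 2 := by
    rw [gC_hmul]
    refine le_trans (norm_add_le _ _) ?_
    refine le_trans (add_le_add (norm_add_le _ _) (le_refl _)) ?_
    rw [abs_gC_eq, abs_gC_eq, norm_mul, Complex.norm_two]
    have := abs_SC_le ξ η
    nlinarith [KN_nonneg ξ, KN_nonneg η]
  refine le_trans (Real.sqrt_le_sqrt h) ?_
  rw [Real.sqrt_sq (add_nonneg (KN_nonneg ξ) (KN_nonneg η))]

lemma Hplane_symm {n : ℕ} {ξ η : Hpt n} (h : ξ ∈ Hplane η) : η ∈ Hplane ξ := by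
  simp only [Hplane, Set.mem_setOf_eq] at *
  rw [dotR_comm η.1 ξ.2.1, dotR_comm ξ.1 η.2.1] at h ⊢
  linarith

lemma horiz_of_Hplane {n : ℕ} {ξ₁ ξ₂ : Hpt n} (h : ξ₂ ∈ Hplane ξ₁) :
    (hmul (hinv ξ₁) ξ₂).2.2 = 0 := by
  simp only [Hplane, Set.mem_setOf_eq] at h
  simp only [hmul, hinv, dotR_neg_left]
  rw [dotR_comm ξ₁.2.1 ξ₂.1] at *
  linarith

lemma mul_horiz_mem_Hplane {n : ℕ} (ξ θ : Hpt n) (h : θ.2.2 = 0) :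
    hmul ξ θ ∈ Hplane ξ := by
  simp only [Hplane, Set.mem_setOf_eq, hmul, dotR_add_left, dotR_add_right, dotR_comm θ.1 ξ.2.1]
  rw [h]; ring

lemma KN_hinv {n : ℕ} (ξ : Hpt n) : KN (hinv ξ) = KN ξ := by
  unfold KN hinv
  simp only [dotR_neg_left, dotR_neg_right]
  ring_nf

lemma hinv_hmul {n : ℕ} (a b : Hpt n) : hinv (hmul a b) = hmul (hinv b) (hinv a) := by
  unfold hmul hinv
  refine Prod.ext (by simp [add_comm]) (Prod.ext (by simp [add_comm]) ?_)
  simp only [dotR_neg_left, dotR_neg_right, dotR_comm b.2.1 a.1, dotR_comm b.1 a.2.1]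
  ring

lemma dH_symm {n : ℕ} (ξ η : Hpt n) : dH ξ η = dH η ξ := by
  unfold dH
  rw [← KN_hinv (hmul (hinv η) ξ), hinv_hmul]
  congr 1
  congr 1
  · unfold hinv; simp

lemma mem_closure_of_KN_le {n : ℕ} {Ω : Set (Hpt n)} {c R : ℝ} (hc : 0 < c) (hR : 0 < R)
    (hball : {ξ : Hpt n | KN ξ < c * R} ⊆ Ω) {ζ : Hpt n} (hζ : KN ζ ≤ c * R) :
    ζ ∈ closure Ω := by
  have hcont : Continuous (fun t : ℝ => hdil t ζ) := by
    unfold hdil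
    refine Continuous.prodMk ?_ (Continuous.prodMk ?_ ?_)
    · exact continuous_id.smul continuous_const
    · exact continuous_id.smul continuous_const
    · exact (continuous_pow 2).mul continuous_const
  have htend : Filter.Tendsto (fun t : ℝ => hdil t ζ) (nhdsWithin 1 (Set.Iio 1)) (nhds ζ) := by
    have := hcont.continuousAt (x := (1:ℝ))
    rw [ContinuousAt, hdil_one] at this
    exact this.mono_left nhdsWithin_le_nhds
  refine mem_closure_of_tendsto htend ?_
  have hmem : Set.Ioo (0:ℝ) 1 ∈ nhdsWithin (1:ℝ) (Set.Iio 1) :=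
    Ioo_mem_nhdsLT_of_mem (by constructor <;> norm_num)
  filter_upwards [hmem] with t ht
  refine hball ?_
  simp only [Set.mem_setOf_eq]
  rw [KN_hdil (le_of_lt ht.1)]
  calc t * KN ζ ≤ t * (c * R) := by
        exact mul_le_mul_of_nonneg_left hζ (le_of_lt ht.1)
    _ < 1 * (c * R) := by
        exact mul_lt_mul_of_pos_right ht.2 (by positivity)
    _ = c * R := one_mul _

lemma harnack_half {n : ℕ} {Ω : Set (Hpt n)} {c R c₁ c₃ : ℝ} (hc : 0 < c) (hR : 0 < R)
    (hball : {ξ : Hpt n | KN ξ < c * R} ⊆ Ω) {u : Hpt n → ℝ} (hu : HConvexOn (closure Ω) u)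
    (hneg : ∀ ξ ∈ Ω, u ξ ≤ 0) {ξ₁ ξ₂ : Hpt n} (h1 : KN ξ₁ < c * R) (hH : ξ₂ ∈ Hplane ξ₁)
    (hc₁ : 0 ≤ c₁) (hc₃ : 0 < c₃) (hN1 : KN ξ₁ ≤ c₁ * R) (hd : dH ξ₂ ξ₁ ≤ c₃ * R)
    (h13 : c₁ + c₃ < c) : u ξ₂ ≤ ((c - c₁ - c₃) / (c - c₁)) * u ξ₁ := by
  have hcc₁ : 0 < c - c₁ := by linarith
  set l : ℝ := c₃ / (c - c₁) with hl_def
  have hl0 : 0 < l := div_pos hc₃ hcc₁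
  have hl1 : l < 1 := (div_lt_one hcc₁).mpr (by linarith)
  have hcoef : (c - c₁ - c₃) / (c - c₁) = 1 - l := by
    rw [hl_def]; field_simp
  rw [hcoef]
  have H : ∀ l' : ℝ, l < l' → l' ≤ 1 → u ξ₂ ≤ (1 - l') * u ξ₁ := by
    intro l' hll' hl'1
    have hl'0 : 0 < l' := lt_trans hl0 hll'
    set ζ : Hpt n := hmul (hinv ξ₁) ξ₂ with hζ_def
    have hζt : ζ.2.2 = 0 := horiz_of_Hplane hH
    set η : Hpt n := hmul ξ₁ (hdil l'⁻¹ ζ) with hη_def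
    have hdη : KN (hdil l'⁻¹ ζ) = l'⁻¹ * KN ζ := KN_hdil (inv_nonneg.mpr hl'0.le) ζ
    have hc3l : c₃ < l' * (c - c₁) := (div_lt_iff₀ hcc₁).mp hll'
    have hstep : l'⁻¹ * (c₃ * R) < (c - c₁) * R := by
      rw [inv_mul_lt_iff₀ hl'0]
      have : c₃ * R < (l' * (c - c₁)) * R := by
        exact mul_lt_mul_of_pos_right hc3l hR
      linarith [this]
    have hζN : KN ζ ≤ c₃ * R := hd
    have hmono : l'⁻¹ * KN ζ ≤ l'⁻¹ * (c₃ * R) :=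
      mul_le_mul_of_nonneg_left hζN (inv_nonneg.mpr hl'0.le)
    have hηN : KN η < c * R := by
      have := KN_triangle ξ₁ (hdil l'⁻¹ ζ)
      rw [hdη] at this
      have : KN η ≤ KN ξ₁ + l'⁻¹ * KN ζ := this
      nlinarith
    have hηΩ : η ∈ Ω := hball hηN
    have hξ₁c : ξ₁ ∈ closure Ω := subset_closure (hball h1)
    have hηc : η ∈ closure Ω := subset_closure hηΩ
    have hplane : ξ₁ ∈ Hplane η := by
      refine Hplane_symm (mul_horiz_mem_Hplane ξ₁ (hdil l'⁻¹ ζ) ?_)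
      simp [hdil, hζt]
    have hconv := hu ξ₁ hξ₁c η hηc hplane l' (Set.mem_Icc.mpr ⟨hl'0.le, hl'1⟩)
    have hpt : hmul ξ₁ (hdil l' (hmul (hinv ξ₁) η)) = ξ₂ := by
      rw [hη_def, hmul_inv_cancel_left, hdil_hdil, mul_inv_cancel₀ (ne_of_gt hl'0), hdil_one]
      exact hmul_cancel_left ξ₁ ξ₂
    rw [hpt] at hconv
    have huη : u η ≤ 0 := hneg η hηΩ
    have : l' * u η ≤ 0 := mul_nonpos_of_nonneg_of_nonpos hl'0.le huη
    linarith
  refine le_of_forall_pos_le_add ?_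
  intro ε hε
  set δ : ℝ := min ((1 - l) / 2) (ε / (1 + |u ξ₁|)) with hδ_def
  have habs : (0:ℝ) ≤ |u ξ₁| := abs_nonneg _
  have hδ0 : 0 < δ := lt_min (by linarith) (div_pos hε (by linarith))
  have hδ1 : δ ≤ (1 - l) / 2 := min_le_left _ _
  have hδ2 : δ ≤ ε / (1 + |u ξ₁|) := min_le_right _ _
  have hkey := H (l + δ) (by linarith) (by linarith)
  have h7 : δ * (-u ξ₁) ≤ δ * |u ξ₁| := by
    exact mul_le_mul_of_nonneg_left (neg_le_abs _) hδ0.le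
  have h8 : δ * |u ξ₁| ≤ ε := by
    have := mul_le_mul_of_nonneg_right hδ2 habs
    rw [div_mul_eq_mul_div] at this
    refine le_trans this ?_
    rw [div_le_iff₀ (by linarith)]
    nlinarith
  nlinarith [hkey]

end HarnackAux

/-- Two-sided Harnack-type lemma for `H`-convex functions (Lemma 6.3). -/
theorem two_sided_harnack_lemma {n : ℕ} (Ω : Set (Hpt n)) (hopen : IsOpen Ω)
    (hconv : Convex ℝ Ω) (c R : ℝ) (hc : 0 < c) (hR : 0 < R)
    (hball : {ξ : Hpt n | KN ξ < c * R} ⊆ Ω)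
    (u : Hpt n → ℝ) (hu : HConvexOn (closure Ω) u) (hneg : ∀ ξ ∈ Ω, u ξ ≤ 0)
    (ξ₁ ξ₂ : Hpt n) (h1 : KN ξ₁ < c * R) (h2 : KN ξ₂ < c * R)
    (hH : ξ₂ ∈ Hplane ξ₁)
    (c₁ c₂ c₃ : ℝ) (hc₁ : 0 ≤ c₁) (hc₂ : 0 ≤ c₂) (hc₃ : 0 < c₃)
    (hN1 : KN ξ₁ ≤ c₁ * R) (hN2 : KN ξ₂ ≤ c₂ * R) (hd12 : dH ξ₂ ξ₁ ≤ c₃ * R)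
    (h13 : c₁ + c₃ < c) (h23 : c₂ + c₃ < c) :
    ((c - c₁ - c₃) / (c - c₁)) * u ξ₁ ≥ u ξ₂ ∧
      u ξ₂ ≥ ((c - c₂) / (c - c₂ - c₃)) * u ξ₁ := by
  constructor
  · exact harnack_half hc hR hball hu hneg h1 hH hc₁ hc₃ hN1 hd12 h13
  · have hd21 : dH ξ₁ ξ₂ ≤ c₃ * R := by rw [dH_symm]; exact hd12
    have hkey := harnack_half hc hR hball hu hneg h2 (Hplane_symm hH) hc₂ hc₃ hN2 hd21 h23
    have hp1 : 0 < c - c₂ := by linarith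
    have hp2 : 0 < c - c₂ - c₃ := by linarith
    rw [div_mul_eq_mul_div, le_div_iff₀ hp1] at hkey
    rw [ge_iff_le, div_mul_eq_mul_div, div_le_iff₀ hp2]
    nlinarith
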